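/- Let T = Π_U^{α₂}Π_V^{α₁} be the GAP operator for subspaces U, V ⊂ ℝⁿ with p = dim U, q = dim V, s = dim(U ∩ V). Then the multiset of eigenvalues of T is: {1} with multiplicity s, {(1−α₁)(1−α₂)} with multiplicity s + n − p − q, {1−α₂} with multiplicity max(0, q−p), {1−α₁} with multiplicity max(0, p−q), and the pairs λ_i^{1,2} = f_i ± √(f_i² − (1−α₁)(1−α₂)), f_i = (1/2)(2 − α₁ − α₂ + α₁α₂cos²θ_i), for each nonzero principal angle θ_i, i = s+1, …, min(p,q). The case p + q ≥ n reduces to p + q < n by embedding ℝⁿ into ℝ^{n+k}: if T̄ = blkdiag(T, (1−α₁)(1−α₂)I_k) then spectrum(T̄) = spectrum(T) ∪ {(1−α₁)(1−α₂)}^k as multisets. -/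

import Mathlib

open Matrix Polynomial

-- eval of charpoly
lemma eval_cp {n : ℕ} (M : Matrix (Fin n) (Fin n) ℝ) (x : ℝ) :
    M.charpoly.eval x = (x • (1 : Matrix (Fin n) (Fin n) ℝ) - M).det := by
  rw [Matrix.charpoly, ← Polynomial.coe_evalRingHom, RingHom.map_det]
  congr 1
  ext i j
  by_cases h : i = j
  · subst h; simp [charmatrix_apply_eq, Matrix.one_apply]
  · simp [charmatrix_apply_ne _ _ _ h, Matrix.one_apply, h]

-- polynomial equality off a finite set
lemma poly_eq_of_eval {p q : ℝ[X]} (S : Set ℝ) (hS : S.Finite)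
    (h : ∀ x ∉ S, p.eval x = q.eval x) : p = q := by
  by_contra hne
  have h1 : Set.Finite {x : ℝ | (p - q).IsRoot x} :=
    Polynomial.finite_setOf_isRoot (sub_ne_zero.2 hne)
  have : (Set.univ : Set ℝ) ⊆ {x : ℝ | (p - q).IsRoot x} ∪ S := by
    intro x _
    by_cases hx : x ∈ S
    · exact Or.inr hx
    · exact Or.inl (by simp [Polynomial.IsRoot, h x hx])
  exact Set.infinite_univ (Set.Finite.subset (h1.union hS) this)

-- det commutation
lemma det_smul_one_sub_mul_comm {n : ℕ} (y : ℝ) (hy : y ≠ 0)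
    (A B : Matrix (Fin n) (Fin n) ℝ) :
    (y • (1:Matrix (Fin n) (Fin n) ℝ) - A * B).det
      = (y • (1:Matrix (Fin n) (Fin n) ℝ) - B * A).det := by
  have e : ∀ C D : Matrix (Fin n) (Fin n) ℝ,
      y • (1:Matrix (Fin n) (Fin n) ℝ) - C * D
        = y • ((1:Matrix (Fin n) (Fin n) ℝ) - (y⁻¹ • C) * D) := by
    intro C D
    rw [smul_sub, smul_mul_assoc, smul_smul, mul_inv_cancel₀ hy, one_smul]
  rw [e A B, e B A, Matrix.det_smul, Matrix.det_smul, Matrix.det_one_sub_mul_comm]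
  congr 1
  rw [Matrix.mul_smul, Matrix.smul_mul]


lemma det_idem {n r : ℕ} (A : Matrix (Fin n) (Fin n) ℝ)
    (hsym : Aᵀ = A) (hidem : A * A = A) (hrank : A.rank = r) (α β : ℝ) :
    (α • (1 : Matrix (Fin n) (Fin n) ℝ) - β • A).det = α ^ (n - r) * (α - β) ^ r := by
  classical
  have hA : A.IsHermitian := by
    rw [Matrix.IsHermitian, Matrix.conjTranspose_eq_transpose_of_trivial, hsym]
  set E := hA.eigenvalues with hE
  -- eigenvalues are 0 or 1
  have h01 : ∀ i, E i = 0 ∨ E i = 1 := by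
    intro i
    have hv := hA.mulVec_eigenvectorBasis i
    have hv2 : A *ᵥ (A *ᵥ ⇑(hA.eigenvectorBasis i)) = (E i * E i) • ⇑(hA.eigenvectorBasis i) := by
      rw [hv, Matrix.mulVec_smul, hv, smul_smul]
    rw [Matrix.mulVec_mulVec, hidem, hv] at hv2
    have hvne : ⇑(hA.eigenvectorBasis i) ≠ 0 := by
      have := hA.eigenvectorBasis.orthonormal.ne_zero i
      intro hc
      apply this
      ext j
      exact congrFun hc j
    have : (E i * E i - E i) • ⇑(hA.eigenvectorBasis i) = 0 := by
      rw [sub_smul, hv2, sub_self]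
    rcases smul_eq_zero.mp this with h | h
    · have h' : E i * (E i - 1) = 0 := by ring_nf; linarith [h]
      rcases mul_eq_zero.mp h' with h'' | h''
      · exact Or.inl h''
      · exact Or.inr (by linarith [sub_eq_zero.mp h''])
    · exact absurd h hvne
  -- conjugate by unitary
  have hU : (hA.eigenvectorUnitary : Matrix (Fin n) (Fin n) ℝ)
      * star (hA.eigenvectorUnitary : Matrix (Fin n) (Fin n) ℝ) = 1 :=
    (Matrix.mem_unitaryGroup_iff).mp (hA.eigenvectorUnitary).2
  have hdiag0 : Matrix.diagonal (RCLike.ofReal ∘ hA.eigenvalues)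
      = Matrix.diagonal E := by
    congr 1
  have key : α • (1 : Matrix (Fin n) (Fin n) ℝ) - β • A
      = (hA.eigenvectorUnitary : Matrix (Fin n) (Fin n) ℝ)
        * (α • (1 : Matrix (Fin n) (Fin n) ℝ) - β • Matrix.diagonal E)
        * star (hA.eigenvectorUnitary : Matrix (Fin n) (Fin n) ℝ) := by
    rw [Matrix.mul_sub, Matrix.sub_mul]
    congr 1
    · rw [Matrix.mul_smul, Matrix.smul_mul, Matrix.mul_one, hU]
    · rw [Matrix.mul_smul, Matrix.smul_mul]
      congr 1
      conv_lhs => rw [hA.spectral_theorem, hdiag0]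
      rw [Unitary.conjStarAlgAut_apply]
  rw [key, Matrix.det_mul, Matrix.det_mul, mul_right_comm, ← Matrix.det_mul,
    hU, Matrix.det_one, one_mul]
  have hdiag : α • (1 : Matrix (Fin n) (Fin n) ℝ) - β • Matrix.diagonal E
      = Matrix.diagonal (fun i => α - β * E i) := by
    rw [Matrix.smul_one_eq_diagonal]
    ext i j
    by_cases h : i = j <;> simp [Matrix.diagonal, h]
  rw [hdiag, Matrix.det_diagonal]
  -- split the product
  have hr : (Finset.univ.filter (fun i => E i ≠ 0)).card = r := by
    rw [← hrank, hA.rank_eq_card_non_zero_eigs, Fintype.card_subtype]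
  have hnr : (Finset.univ.filter (fun i => ¬ E i ≠ 0)).card = n - r := by
    have := Finset.card_filter_add_card_filter_not
      (s := (Finset.univ : Finset (Fin n))) (p := fun i => E i ≠ 0)
    simp only [Finset.card_univ, Fintype.card_fin] at this
    omega
  rw [← Finset.prod_filter_mul_prod_filter_not Finset.univ (fun i => E i ≠ 0)]
  have e1 : ∀ i ∈ Finset.univ.filter (fun i => E i ≠ 0), α - β * E i = α - β := by
    intro i hi
    rcases h01 i with h | h
    · simp [Finset.mem_filter, h] at hi
    · rw [h, mul_one]
  have e2 : ∀ i ∈ Finset.univ.filter (fun i => ¬ E i ≠ 0), α - β * E i = α := by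
    intro i hi
    simp only [Finset.mem_filter, not_not] at hi
    rw [hi.2, mul_zero, sub_zero]
  rw [Finset.prod_congr rfl e1, Finset.prod_congr rfl e2, Finset.prod_const, Finset.prod_const,
    hr, hnr, mul_comm]

lemma detT_eq {n p q : ℕ} (α₁ α₂ : ℝ) (P Q : Matrix (Fin n) (Fin n) ℝ)
    (hPsymm : Pᵀ = P) (hPidem : P * P = P) (hQsymm : Qᵀ = Q) (hQidem : Q * Q = Q)
    (hp : P.rank = p) (hq : Q.rank = q) (hmn : min p q ≤ n)
    (θ : Fin (min p q) → ℝ)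
    (hθchar : (P * Q * P).charpoly
      = X ^ (n - min p q) * ∏ i : Fin (min p q), (X - C (Real.cos (θ i) ^ 2)))
    (x : ℝ) (hxa : x - (1-α₁)*(1-α₂) ≠ 0) (hx1 : x - (1-α₁) ≠ 0)
    (hx2 : x - (1-α₂) ≠ 0) :
    (x • (1 : Matrix (Fin n) (Fin n) ℝ)
        - ((1-α₂) • (1 : Matrix (Fin n) (Fin n) ℝ) + α₂ • P) *
          ((1-α₁) • (1 : Matrix (Fin n) (Fin n) ℝ) + α₁ • Q)).det
      * (x - (1-α₁)*(1-α₂))^q * ((x - (1-α₁)) * (x - (1-α₂)))^(min p q)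
    = (x - (1-α₁)*(1-α₂))^(n-p) * (x - (1-α₁))^p * (x - (1-α₂))^q
      * ∏ i : Fin (min p q),
          (x^2 - (2 - α₁ - α₂ + α₁*α₂*Real.cos (θ i)^2)*x + (1-α₁)*(1-α₂)) := by
  have hQPQ : Q * (Q * P * Q) = Q * P * Q := by
    rw [← Matrix.mul_assoc, ← Matrix.mul_assoc, hQidem]
  set u : ℝ := (x - (1-α₁)*(1-α₂))⁻¹ with hu
  set v : ℝ := (x - (1-α₁))⁻¹ with hv
  set ub : ℝ := u * (α₁*(1-α₂)) with hub
  set wt : ℝ := u*(α₁*α₂) + (v-u)*(α₁*(1-α₂)) + (v-u)*(α₁*α₂) with hwt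
  have h1ub : (1:ℝ) - ub = (x - (1-α₂)) * (x - (1-α₁)*(1-α₂))⁻¹ := by
    rw [hub, hu]
    field_simp
    ring
  have h1ubne : (1:ℝ) - ub ≠ 0 := by
    rw [h1ub]; exact mul_ne_zero hx2 (inv_ne_zero hxa)
  set w' : ℝ := wt * (1 - ub)⁻¹ with hw'
  -- scalar facts
  have e1 : (x - (1-α₁)*(1-α₂)) * u = 1 := by
    rw [hu]; field_simp
  have e2 : (x - (1-α₁)*(1-α₂)) * (v - u) - ((1-α₁)*α₂) * u - ((1-α₁)*α₂) * (v - u) = 0 := by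
    rw [hu, hv]
    field_simp
    ring
  have hwteq : w' * (1 - ub) = wt := by
    rw [hw']; field_simp
  have hwx : w' * ((x - (1-α₁)) * (x - (1-α₂))) = (α₁*α₂) * x := by
    rw [hw', h1ub, mul_inv, inv_inv, hwt, hu, hv]
    field_simp
    ring
  have hquad : ∀ t : ℝ, (1 - w' * t) * ((x - (1-α₁)) * (x - (1-α₂)))
      = x^2 - (2 - α₁ - α₂ + α₁*α₂*t)*x + (1-α₁)*(1-α₂) := by
    intro t
    linear_combination (-t) * hwx
  clear_value u v ub wt w'
  set M : Matrix (Fin n) (Fin n) ℝ := (x - (1-α₁)*(1-α₂)) • 1 - ((1-α₁)*α₂) • P with hM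
  set Mi : Matrix (Fin n) (Fin n) ℝ := u • 1 + (v - u) • P with hMi
  set N : Matrix (Fin n) (Fin n) ℝ := (α₁*(1-α₂)) • 1 + (α₁*α₂) • P with hN
  set G : Matrix (Fin n) (Fin n) ℝ := Q * P * Q with hG
  -- step 1 : split
  have hsplit : x • (1 : Matrix (Fin n) (Fin n) ℝ)
      - ((1-α₂) • (1 : Matrix (Fin n) (Fin n) ℝ) + α₂ • P) *
        ((1-α₁) • (1 : Matrix (Fin n) (Fin n) ℝ) + α₁ • Q) = M - N * Q := by
    rw [hM, hN]
    simp only [Matrix.add_mul, Matrix.mul_add, Matrix.smul_mul, Matrix.mul_smul,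
      smul_smul, Matrix.mul_one, Matrix.one_mul]
    module
  -- step 2 : M * Mi = 1
  have hMMi : M * Mi = 1 := by
    rw [hM, hMi]
    simp only [Matrix.add_mul, Matrix.mul_add, Matrix.smul_mul, Matrix.mul_smul,
      Matrix.sub_mul, smul_smul, Matrix.mul_one, Matrix.one_mul, hPidem]
    match_scalars
    · linarith [e1]
    · linear_combination e2
  -- step 3 : C = Mi * N
  have hC : Mi * N = ub • (1 : Matrix (Fin n) (Fin n) ℝ) + wt • P := by
    rw [hMi, hN, hub, hwt]
    simp only [Matrix.add_mul, Matrix.mul_add, Matrix.smul_mul, Matrix.mul_smul,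
      smul_smul, Matrix.mul_one, Matrix.one_mul, hPidem]
    module
  -- step 4 : determinant split
  have hdet1 : (x • (1 : Matrix (Fin n) (Fin n) ℝ)
      - ((1-α₂) • (1 : Matrix (Fin n) (Fin n) ℝ) + α₂ • P) *
        ((1-α₁) • (1 : Matrix (Fin n) (Fin n) ℝ) + α₁ • Q)).det
      = M.det * ((1 : Matrix (Fin n) (Fin n) ℝ) - (Mi * N) * Q).det := by
    rw [hsplit, ← Matrix.det_mul]
    congr 1
    rw [Matrix.mul_sub, Matrix.mul_one, ← Matrix.mul_assoc, ← Matrix.mul_assoc, hMMi,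
      Matrix.one_mul]
  -- step 5 : WA shuffle
  have hdet2 : ((1 : Matrix (Fin n) (Fin n) ℝ) - (Mi * N) * Q).det
      = ((1 : Matrix (Fin n) (Fin n) ℝ) - (ub • Q + wt • G)).det := by
    rw [Matrix.det_one_sub_mul_comm]
    have htmp : Q * (Mi * N) = Q * (Q * (Mi * N)) := by
      rw [← Matrix.mul_assoc Q Q (Mi * N), hQidem]
    rw [htmp, Matrix.det_one_sub_mul_comm]
    congr 2
    rw [hC]
    simp only [Matrix.add_mul, Matrix.mul_add, Matrix.smul_mul, Matrix.mul_smul,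
      Matrix.mul_one, Matrix.one_mul]
    rw [hQidem, hG, Matrix.mul_assoc]
  -- step 6 : factor
  have hfac : (1 : Matrix (Fin n) (Fin n) ℝ) - (ub • Q + wt • G)
      = ((1 : Matrix (Fin n) (Fin n) ℝ) - ub • Q) * ((1 : Matrix (Fin n) (Fin n) ℝ) - w' • G) := by
    have hQG : Q * G = G := by rw [hG]; exact hQPQ
    simp only [Matrix.mul_sub, Matrix.sub_mul, Matrix.mul_one, Matrix.one_mul,
      Matrix.smul_mul, Matrix.mul_smul, smul_smul, hQG]
    match_scalars
    · ring
    · ring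
    · linear_combination hwteq
  -- step 7 : det of 1 - ub Q
  have hdetQ : ((1 : Matrix (Fin n) (Fin n) ℝ) - ub • Q).det = (1 - ub)^q := by
    have h7 := det_idem Q hQsymm hQidem hq 1 ub
    rw [one_smul] at h7
    rw [h7, one_pow, one_mul]
  -- step 8 : det of 1 - w' G
  have hPQPdet : ∀ y : ℝ, y ≠ 0 →
      (y • (1 : Matrix (Fin n) (Fin n) ℝ) - G).det
        = y^(n - min p q) * ∏ i : Fin (min p q), (y - Real.cos (θ i)^2) := by
    intro y hy
    have hGPQ : (y • (1 : Matrix (Fin n) (Fin n) ℝ) - G).det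
        = (y • (1 : Matrix (Fin n) (Fin n) ℝ) - P * Q).det := by
      rw [hG, det_smul_one_sub_mul_comm y hy (Q * P) Q, ← Matrix.mul_assoc Q Q P, hQidem,
        det_smul_one_sub_mul_comm y hy Q P]
    have hPQPd : (y • (1 : Matrix (Fin n) (Fin n) ℝ) - P * Q * P).det
        = (y • (1 : Matrix (Fin n) (Fin n) ℝ) - P * Q).det := by
      rw [det_smul_one_sub_mul_comm y hy (P * Q) P, ← Matrix.mul_assoc P P Q, hPidem]
    rw [hGPQ, ← hPQPd, ← eval_cp, hθchar]
    simp [Polynomial.eval_prod]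
  have hdetG : ((1 : Matrix (Fin n) (Fin n) ℝ) - w' • G).det
      = ∏ i : Fin (min p q), (1 - w' * Real.cos (θ i)^2) := by
    by_cases hw : w' = 0
    · simp [hw]
    · have h8 : (1 : Matrix (Fin n) (Fin n) ℝ) - w' • G
          = w' • (w'⁻¹ • (1 : Matrix (Fin n) (Fin n) ℝ) - G) := by
        rw [smul_sub, smul_smul, mul_inv_cancel₀ hw, one_smul]
      rw [h8, Matrix.det_smul, hPQPdet w'⁻¹ (inv_ne_zero hw)]
      have hcard : (Fintype.card (Fin n)) = n := by simp
      rw [hcard]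
      have hnm : n - min p q + min p q = n := by omega
      calc w' ^ n * ((w'⁻¹) ^ (n - min p q) * ∏ i : Fin (min p q), (w'⁻¹ - Real.cos (θ i)^2))
          = (w' * w'⁻¹) ^ (n - min p q)
              * (w' ^ (min p q) * ∏ i : Fin (min p q), (w'⁻¹ - Real.cos (θ i)^2)) := by
            have hsplitpow : w' ^ n = w' ^ (n - min p q) * w' ^ (min p q) := by
              rw [← pow_add, hnm]
            rw [hsplitpow, mul_pow]; ring
        _ = ∏ i : Fin (min p q), (w' * (w'⁻¹ - Real.cos (θ i)^2)) := by
            rw [mul_inv_cancel₀ hw, one_pow, one_mul, Finset.prod_mul_distrib,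
              Finset.prod_const, Finset.card_univ, Fintype.card_fin]
        _ = ∏ i : Fin (min p q), (1 - w' * Real.cos (θ i)^2) := by
            refine Finset.prod_congr rfl fun i _ => ?_
            rw [mul_sub, mul_inv_cancel₀ hw]
  -- step 9 : det of M
  have hdetM : M.det = (x - (1-α₁)*(1-α₂))^(n-p) * (x - (1-α₁))^p := by
    rw [hM, det_idem P hPsymm hPidem hp (x - (1-α₁)*(1-α₂)) ((1-α₁)*α₂)]
    congr 2
    ring
  -- assembly
  rw [hdet1, hdet2, hfac, Matrix.det_mul, hdetQ, hdetG, hdetM]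
  have hppow : ((x - (1-α₁)*(1-α₂))⁻¹)^q * (x - (1-α₁)*(1-α₂))^q = 1 := by
    rw [← mul_pow, inv_mul_cancel₀ hxa, one_pow]
  have hprodq : (∏ i : Fin (min p q), (1 - w' * Real.cos (θ i)^2))
        * ((x - (1-α₁)) * (x - (1-α₂)))^(min p q)
      = ∏ i : Fin (min p q),
          (x^2 - (2 - α₁ - α₂ + α₁*α₂*Real.cos (θ i)^2)*x + (1-α₁)*(1-α₂)) := by
    have hconst : ((x - (1-α₁)) * (x - (1-α₂)))^(min p q)
        = ∏ _i : Fin (min p q), ((x - (1-α₁)) * (x - (1-α₂))) := by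
      rw [Finset.prod_const, Finset.card_univ, Fintype.card_fin]
    rw [hconst, ← Finset.prod_mul_distrib]
    exact Finset.prod_congr rfl fun i _ => hquad _
  calc (x - (1-α₁)*(1-α₂))^(n-p) * (x - (1-α₁))^p * ((1 - ub)^q
        * ∏ i : Fin (min p q), (1 - w' * Real.cos (θ i)^2)) * (x - (1-α₁)*(1-α₂))^q
        * ((x - (1-α₁)) * (x - (1-α₂)))^(min p q)
      = (x - (1-α₁)*(1-α₂))^(n-p) * (x - (1-α₁))^p * (x - (1-α₂))^q
          * (((x - (1-α₁)*(1-α₂))⁻¹)^q * (x - (1-α₁)*(1-α₂))^q)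
          * ((∏ i : Fin (min p q), (1 - w' * Real.cos (θ i)^2))
              * ((x - (1-α₁)) * (x - (1-α₂)))^(min p q)) := by
        rw [h1ub, mul_pow]; ring
    _ = (x - (1-α₁)*(1-α₂))^(n-p) * (x - (1-α₁))^p * (x - (1-α₂))^q
          * ∏ i : Fin (min p q),
              (x^2 - (2 - α₁ - α₂ + α₁*α₂*Real.cos (θ i)^2)*x + (1-α₁)*(1-α₂)) := by
        rw [hppow, hprodq, mul_one]

/-- Full eigenvalue (multiset) description of the GAP operator
`T = Π_U^{α₂} Π_V^{α₁}` for two subspaces given by their orthogonal projection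
matrices `P, Q` with `dim U = p`, `dim V = q`, `dim (U ∩ V) = s`, stated as a
factorization of the characteristic polynomial.  The principal angles `θ_i`,
`i < min p q`, are characterized spectrally via `P Q P`; `θ_i = 0` iff `i < s`.
Also included is the embedding reduction: appending a scalar block
`(1-α₁)(1-α₂)·I_k` adds exactly `k` eigenvalues `(1-α₁)(1-α₂)`. -/
theorem gap_operator_all_eigenvalues (n p q s : ℕ) (α₁ α₂ : ℝ)
    (P Q : Matrix (Fin n) (Fin n) ℝ)
    (hPsymm : Pᵀ = P) (hPidem : P * P = P) (hQsymm : Qᵀ = Q) (hQidem : Q * Q = Q)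
    (hp : P.rank = p) (hq : Q.rank = q)
    (hs : Module.finrank ℝ
      ↥(LinearMap.range P.mulVecLin ⊓ LinearMap.range Q.mulVecLin) = s)
    (θ : Fin (min p q) → ℝ) (hθmono : Monotone θ)
    (hθrange : ∀ i, θ i ∈ Set.Icc 0 (Real.pi/2))
    (hθzero : ∀ i : Fin (min p q), θ i = 0 ↔ (i : ℕ) < s)
    (hθchar : (P * Q * P).charpoly
      = X ^ (n - min p q) * ∏ i : Fin (min p q), (X - C (Real.cos (θ i) ^ 2))) :
    (((1-α₂) • (1 : Matrix (Fin n) (Fin n) ℝ) + α₂ • P) *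
        ((1-α₁) • (1 : Matrix (Fin n) (Fin n) ℝ) + α₁ • Q)).charpoly
      = (X - 1)^s * (X - C ((1-α₁)*(1-α₂)))^(s + n - p - q)
        * (X - C (1-α₂))^(q - p) * (X - C (1-α₁))^(p - q)
        * ∏ i : Fin (min p q),
            (if s ≤ (i : ℕ) then
              X^2 - C (2 - α₁ - α₂ + α₁*α₂*Real.cos (θ i)^2) * X + C ((1-α₁)*(1-α₂))
            else 1)
    ∧ ∀ (k : ℕ) (T' : Matrix (Fin n) (Fin n) ℝ),
        (Matrix.fromBlocks T' 0 0
          (((1-α₁)*(1-α₂)) • (1 : Matrix (Fin k) (Fin k) ℝ))).charpoly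
        = T'.charpoly * (X - C ((1-α₁)*(1-α₂)))^k := by
  classical
  -- dimension bookkeeping
  have hp' : Module.finrank ℝ ↥(LinearMap.range P.mulVecLin) = p := hp
  have hq' : Module.finrank ℝ ↥(LinearMap.range Q.mulVecLin) = q := hq
  have hpn : p ≤ n := by
    have := P.rank_le_card_width
    rw [hp, Fintype.card_fin] at this
    exact this
  have hqn : q ≤ n := by
    have := Q.rank_le_card_width
    rw [hq, Fintype.card_fin] at this
    exact this
  have hsp : s ≤ p := by
    rw [← hs, ← hp']
    exact Submodule.finrank_mono inf_le_left
  have hsq : s ≤ q := by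
    rw [← hs, ← hq']
    exact Submodule.finrank_mono inf_le_right
  have hsm : s ≤ min p q := le_min hsp hsq
  have hmn : min p q ≤ n := le_trans (min_le_left _ _) hpn
  have hspq : p + q ≤ n + s := by
    have hd := Submodule.finrank_sup_add_finrank_inf_eq
      (LinearMap.range P.mulVecLin) (LinearMap.range Q.mulVecLin)
    rw [hs, hp', hq'] at hd
    have hle : Module.finrank ℝ
        ↥(LinearMap.range P.mulVecLin ⊔ LinearMap.range Q.mulVecLin) ≤ n := by
      have := Submodule.finrank_le
        (LinearMap.range P.mulVecLin ⊔ LinearMap.range Q.mulVecLin)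
      rwa [Module.finrank_pi ℝ, Fintype.card_fin] at this
    omega
  -- card of small-index set
  have hcardlt : (Finset.univ.filter (fun i : Fin (min p q) => ¬ s ≤ (i : ℕ))).card = s := by
    have hset : Finset.univ.filter (fun i : Fin (min p q) => ¬ s ≤ (i : ℕ))
        = Finset.map (Fin.castLEEmb hsm) Finset.univ := by
      ext i
      simp only [Finset.mem_filter, Finset.mem_univ, true_and, not_le, Finset.mem_map,
        Fin.castLEEmb_apply]
      constructor
      · intro h
        exact ⟨⟨(i : ℕ), h⟩, by ext; simp⟩
      · rintro ⟨j, rfl⟩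
        simpa using j.2
    rw [hset, Finset.card_map, Finset.card_univ, Fintype.card_fin]
  constructor
  · -- main identity
    apply poly_eq_of_eval ({(1-α₁)*(1-α₂), 1-α₁, 1-α₂} : Set ℝ) (Set.toFinite _)
    intro x hx
    simp only [Set.mem_insert_iff, Set.mem_singleton_iff, not_or] at hx
    obtain ⟨ha, h1, h2⟩ := hx
    have hxa : x - (1-α₁)*(1-α₂) ≠ 0 := sub_ne_zero_of_ne ha
    have hx1 : x - (1-α₁) ≠ 0 := sub_ne_zero_of_ne h1
    have hx2 : x - (1-α₂) ≠ 0 := sub_ne_zero_of_ne h2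
    rw [eval_cp]
    -- evaluate the RHS
    rw [eval_mul, eval_mul, eval_mul, eval_mul, eval_pow, eval_pow, eval_pow, eval_pow,
      eval_sub, eval_sub, eval_sub, eval_sub, eval_one, eval_X, eval_C, eval_C, eval_C,
      Polynomial.eval_prod]
    have hifeval : ∀ i : Fin (min p q),
        ((if s ≤ (i : ℕ) then
            X^2 - C (2 - α₁ - α₂ + α₁*α₂*Real.cos (θ i)^2) * X + C ((1-α₁)*(1-α₂))
          else 1) : ℝ[X]).eval x
        = (if s ≤ (i : ℕ) then
            x^2 - (2 - α₁ - α₂ + α₁*α₂*Real.cos (θ i)^2) * x + (1-α₁)*(1-α₂)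
          else 1) := by
      intro i
      by_cases hi : s ≤ (i : ℕ) <;> simp [hi]
    rw [Finset.prod_congr rfl (fun i _ => hifeval i)]
    -- cancel the factor
    apply mul_right_cancel₀ (b := (x - (1-α₁)*(1-α₂))^q
      * ((x - (1-α₁)) * (x - (1-α₂)))^(min p q))
      (mul_ne_zero (pow_ne_zero _ hxa) (pow_ne_zero _ (mul_ne_zero hx1 hx2)))
    have hmain := detT_eq α₁ α₂ P Q hPsymm hPidem hQsymm hQidem hp hq hmn θ hθchar
      x hxa hx1 hx2
    calc (x • (1 : Matrix (Fin n) (Fin n) ℝ)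
          - ((1-α₂) • (1 : Matrix (Fin n) (Fin n) ℝ) + α₂ • P) *
            ((1-α₁) • (1 : Matrix (Fin n) (Fin n) ℝ) + α₁ • Q)).det
          * ((x - (1-α₁)*(1-α₂))^q * ((x - (1-α₁)) * (x - (1-α₂)))^(min p q))
        = (x • (1 : Matrix (Fin n) (Fin n) ℝ)
          - ((1-α₂) • (1 : Matrix (Fin n) (Fin n) ℝ) + α₂ • P) *
            ((1-α₁) • (1 : Matrix (Fin n) (Fin n) ℝ) + α₁ • Q)).det
          * (x - (1-α₁)*(1-α₂))^q * ((x - (1-α₁)) * (x - (1-α₂)))^(min p q) := by ring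
      _ = (x - (1-α₁)*(1-α₂))^(n-p) * (x - (1-α₁))^p * (x - (1-α₂))^q
          * ∏ i : Fin (min p q),
              (x^2 - (2 - α₁ - α₂ + α₁*α₂*Real.cos (θ i)^2)*x + (1-α₁)*(1-α₂)) := hmain
      _ = (x - 1)^s * (x - (1-α₁)*(1-α₂))^(s + n - p - q) * (x - (1-α₂))^(q-p)
          * (x - (1-α₁))^(p-q)
          * (∏ i : Fin (min p q),
              (if s ≤ (i : ℕ) then
                x^2 - (2 - α₁ - α₂ + α₁*α₂*Real.cos (θ i)^2)*x + (1-α₁)*(1-α₂)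
              else 1))
          * ((x - (1-α₁)*(1-α₂))^q * ((x - (1-α₁)) * (x - (1-α₂)))^(min p q)) := by
        -- split the quadratic product at s
        have hper : ∀ i : Fin (min p q),
            (x^2 - (2 - α₁ - α₂ + α₁*α₂*Real.cos (θ i)^2)*x + (1-α₁)*(1-α₂))
            = (if s ≤ (i : ℕ) then
                x^2 - (2 - α₁ - α₂ + α₁*α₂*Real.cos (θ i)^2)*x + (1-α₁)*(1-α₂)
              else 1)
              * (if s ≤ (i : ℕ) then 1 else (x - 1)*(x - (1-α₁)*(1-α₂))) := by
          intro i
          by_cases hi : s ≤ (i : ℕ)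
          · simp [hi]
          · have hθi : θ i = 0 := (hθzero i).mpr (not_le.mp hi)
            simp only [if_neg hi, one_mul]
            rw [hθi, Real.cos_zero]
            ring
        rw [Finset.prod_congr rfl (fun i _ => hper i), Finset.prod_mul_distrib]
        have hconstprod : (∏ i : Fin (min p q),
            (if s ≤ (i : ℕ) then 1 else (x - 1)*(x - (1-α₁)*(1-α₂))))
            = ((x - 1)*(x - (1-α₁)*(1-α₂)))^s := by
          rw [Finset.prod_ite, Finset.prod_const, Finset.prod_const, one_pow, one_mul,
            hcardlt]
        rw [hconstprod]
        -- now pure power juggling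
        have ea : (x - (1-α₁)*(1-α₂))^(n-p) * (x - (1-α₁)*(1-α₂))^s
            = (x - (1-α₁)*(1-α₂))^(s + n - p - q) * (x - (1-α₁)*(1-α₂))^q := by
          rw [← pow_add, ← pow_add]
          congr 1
          omega
        have eb : (x - (1-α₁))^p = (x - (1-α₁))^(p-q) * (x - (1-α₁))^(min p q) := by
          rw [← pow_add]
          congr 1
          omega
        have ec : (x - (1-α₂))^q = (x - (1-α₂))^(q-p) * (x - (1-α₂))^(min p q) := by
          rw [← pow_add]
          congr 1
          omega
        rw [mul_pow ((x-1)) (x - (1-α₁)*(1-α₂)) s, mul_pow (x - (1-α₁)) (x - (1-α₂))]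
        calc (x - (1-α₁)*(1-α₂))^(n-p) * (x - (1-α₁))^p * (x - (1-α₂))^q
              * ((∏ i : Fin (min p q),
                  (if s ≤ (i : ℕ) then
                    x^2 - (2 - α₁ - α₂ + α₁*α₂*Real.cos (θ i)^2)*x + (1-α₁)*(1-α₂)
                  else 1))
                * ((x-1)^s * (x - (1-α₁)*(1-α₂))^s))
            = ((x - (1-α₁)*(1-α₂))^(n-p) * (x - (1-α₁)*(1-α₂))^s)
              * ((x - (1-α₁))^p) * ((x - (1-α₂))^q) * (x-1)^s
              * (∏ i : Fin (min p q),
                  (if s ≤ (i : ℕ) then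
                    x^2 - (2 - α₁ - α₂ + α₁*α₂*Real.cos (θ i)^2)*x + (1-α₁)*(1-α₂)
                  else 1)) := by ring
          _ = ((x - (1-α₁)*(1-α₂))^(s+n-p-q) * (x - (1-α₁)*(1-α₂))^q)
              * ((x - (1-α₁))^(p-q) * (x - (1-α₁))^(min p q))
              * ((x - (1-α₂))^(q-p) * (x - (1-α₂))^(min p q)) * (x-1)^s
              * (∏ i : Fin (min p q),
                  (if s ≤ (i : ℕ) then
                    x^2 - (2 - α₁ - α₂ + α₁*α₂*Real.cos (θ i)^2)*x + (1-α₁)*(1-α₂)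
                  else 1)) := by rw [ea, eb, ec]
          _ = (x - 1)^s * (x - (1-α₁)*(1-α₂))^(s + n - p - q) * (x - (1-α₂))^(q-p)
              * (x - (1-α₁))^(p-q)
              * (∏ i : Fin (min p q),
                  (if s ≤ (i : ℕ) then
                    x^2 - (2 - α₁ - α₂ + α₁*α₂*Real.cos (θ i)^2)*x + (1-α₁)*(1-α₂)
                  else 1))
              * ((x - (1-α₁)*(1-α₂))^q
                * ((x - (1-α₁))^(min p q) * (x - (1-α₂))^(min p q))) := by ring
  · -- block-diagonal reduction
    intro k T'
    rw [Matrix.charpoly_fromBlocks_zero₂₁]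
    congr 1
    rw [Matrix.smul_one_eq_diagonal]
    rw [Matrix.charpoly_of_upperTriangular _ (Matrix.blockTriangular_diagonal _)]
    simp [Matrix.diagonal_apply_eq, Finset.prod_const, Finset.card_univ]
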